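/- arXiv:1408.7036 — 2 statements merged into one kernel-verified Lean document; each statement's English description precedes it below -/
import Mathlib

section
/- Let 0 < p < 1 and let E ⊆ [0, 2π) be a T-set of order N with defining polynomial U and explicit equilibrium density w_U. Then there exist real trigonometric polynomials T_n (T_n of degree at most n, not identically zero on E) and a sequence ε_n → 0 such that for every n, ∫_E |T_n′(t) / (n · 2π · w_U(t))|^p · w_U(t) dt ≥ (1 − ε_n) · ∫_E |T_n(t)|^p · w_U(t) dt. -/
open Real MeasureTheory Set Filter

noncomputable section

/-- `T` is a real trigonometric polynomial of degree at most `n`. -/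
def IsTrigPolyDegLE (T : ℝ → ℝ) (n : ℕ) : Prop :=
  ∃ a b : ℕ → ℝ, ∀ t : ℝ,
    T t = a 0 + ∑ k ∈ Finset.Icc 1 n, (a k * Real.cos (k * t) + b k * Real.sin (k * t))

/-- `U` is a real trigonometric polynomial of degree exactly `N`. -/
def IsTrigPolyDegEq (U : ℝ → ℝ) (N : ℕ) : Prop :=
  ∃ a b : ℕ → ℝ, (a N ≠ 0 ∨ b N ≠ 0) ∧ ∀ t : ℝ,
    U t = a 0 + ∑ k ∈ Finset.Icc 1 N, (a k * Real.cos (k * t) + b k * Real.sin (k * t))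

/-- `E ⊆ [0, 2π)` is a T-set of order `N` with defining polynomial `U` and branches `B`. -/
def IsTSetWithBranches (E : Set ℝ) (N : ℕ) (U : ℝ → ℝ) (B : Fin (2 * N) → Set ℝ) : Prop :=
  0 < N ∧ IsTrigPolyDegEq U N ∧
  E = {t ∈ Set.Ico (0 : ℝ) (2 * π) | U t ∈ Set.Icc (-1 : ℝ) 1} ∧
  (∀ h, ∃ x y : ℝ, x < y ∧ B h = Set.Icc x y) ∧
  (∀ h h', h ≠ h' → interior (B h) ∩ interior (B h') = ∅) ∧
  E = ⋃ h, B h ∧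
  (∀ h, StrictMonoOn U (B h) ∨ StrictAntiOn U (B h)) ∧
  (∀ h, U '' B h = Set.Icc (-1 : ℝ) 1)

/-- `E ⊆ [0, 2π)` is a T-set of order `N` with defining polynomial `U`. -/
def IsTSet (E : Set ℝ) (N : ℕ) (U : ℝ → ℝ) : Prop :=
  ∃ B : Fin (2 * N) → Set ℝ, IsTSetWithBranches E N U B

/-- The explicit density `w_U` of the equilibrium measure of `Γ_E`. -/
def eqDensity (N : ℕ) (U : ℝ → ℝ) (t : ℝ) : ℝ :=
  |deriv U t| / (2 * π * N * Real.sqrt (1 - U t ^ 2))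

/-- `A_m(T, X) = ∫_X |T'(t)/(m·2π·w_U(t))|^p · w_U(t) dt`. -/
def Aint (p : ℝ) (N : ℕ) (U : ℝ → ℝ) (m : ℕ) (T : ℝ → ℝ) (X : Set ℝ) : ℝ :=
  ∫ t in X, |deriv T t / ((m : ℝ) * (2 * π) * eqDensity N U t)| ^ p * eqDensity N U t

/-- `B(T, X) = ∫_X |T(t)|^p · w_U(t) dt`. -/
def Bint (p : ℝ) (N : ℕ) (U : ℝ → ℝ) (T : ℝ → ℝ) (X : Set ℝ) : ℝ :=
  ∫ t in X, |T t| ^ p * eqDensity N U t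

end

namespace TPAux

lemma trig_congr {f g : ℝ → ℝ} {n : ℕ} (h : ∀ t, f t = g t) (hg : IsTrigPolyDegLE g n) :
    IsTrigPolyDegLE f n := by
  obtain ⟨a, b, hab⟩ := hg
  exact ⟨a, b, fun t => (h t).trans (hab t)⟩

lemma trig_mono {f : ℝ → ℝ} {a b : ℕ} (h : IsTrigPolyDegLE f a) (hab : a ≤ b) :
    IsTrigPolyDegLE f b := by
  obtain ⟨c, d, hcd⟩ := h
  refine ⟨fun k => if k ≤ a then c k else 0, fun k => if k ≤ a then d k else 0, fun t => ?_⟩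
  dsimp only
  rw [hcd t, if_pos (Nat.zero_le a)]
  congr 1
  rw [← Finset.sum_subset (Finset.Icc_subset_Icc_right hab)]
  · exact Finset.sum_congr rfl fun k hk => by
      have : k ≤ a := (Finset.mem_Icc.1 hk).2
      simp [this]
  · intro k hk hk'
    have : ¬ k ≤ a := by
      simp only [Finset.mem_Icc] at hk hk'
      omega
    simp [this]

lemma trig_const (c : ℝ) (n : ℕ) : IsTrigPolyDegLE (fun _ => c) n := by
  refine ⟨fun k => if k = 0 then c else 0, fun _ => 0, fun t => ?_⟩
  simp

lemma trig_add {f g : ℝ → ℝ} {n : ℕ} (hf : IsTrigPolyDegLE f n) (hg : IsTrigPolyDegLE g n) :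
    IsTrigPolyDegLE (fun t => f t + g t) n := by
  obtain ⟨a1, b1, h1⟩ := hf
  obtain ⟨a2, b2, h2⟩ := hg
  refine ⟨fun k => a1 k + a2 k, fun k => b1 k + b2 k, fun t => ?_⟩
  dsimp only
  have hterm : ∀ k : ℕ, (a1 k + a2 k) * Real.cos (k*t) + (b1 k + b2 k) * Real.sin (k*t)
      = (a1 k * Real.cos (k*t) + b1 k * Real.sin (k*t)) + (a2 k * Real.cos (k*t) + b2 k * Real.sin (k*t)) :=
    fun k => by ring
  simp only [hterm]
  rw [Finset.sum_add_distrib, h1 t, h2 t]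
  ring

lemma trig_smul {f : ℝ → ℝ} {n : ℕ} (c : ℝ) (hf : IsTrigPolyDegLE f n) :
    IsTrigPolyDegLE (fun t => c * f t) n := by
  obtain ⟨a, b, h⟩ := hf
  refine ⟨fun k => c * a k, fun k => c * b k, fun t => ?_⟩
  dsimp only
  rw [h t, mul_add, Finset.mul_sum]
  congr 1
  exact Finset.sum_congr rfl fun k _ => by ring

lemma trig_sub {f g : ℝ → ℝ} {n : ℕ} (hf : IsTrigPolyDegLE f n) (hg : IsTrigPolyDegLE g n) :
    IsTrigPolyDegLE (fun t => f t - g t) n := by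
  exact trig_congr (fun t => by ring) (trig_add hf (trig_smul (-1) hg))

lemma trig_atom_cos {k n : ℕ} (hk : k ≤ n) : IsTrigPolyDegLE (fun t => Real.cos (k * t)) n := by
  rcases Nat.eq_zero_or_pos k with rfl | hk0
  · exact trig_congr (fun t => by simp) (trig_const 1 n)
  refine ⟨fun j => if j = k then 1 else 0, fun _ => 0, fun t => ?_⟩
  dsimp only
  rw [if_neg (by omega : ¬ (0:ℕ) = k), zero_add, Finset.sum_eq_single k]
  · simp
  · intro j hj hjk
    simp [hjk]
  · intro hkn
    exact absurd (Finset.mem_Icc.2 ⟨hk0, hk⟩) hkn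

lemma trig_atom_sin {k n : ℕ} (hk : k ≤ n) : IsTrigPolyDegLE (fun t => Real.sin (k * t)) n := by
  rcases Nat.eq_zero_or_pos k with rfl | hk0
  · exact trig_congr (fun t => by simp) (trig_const 0 n)
  refine ⟨fun _ => 0, fun j => if j = k then 1 else 0, fun t => ?_⟩
  dsimp only
  rw [zero_add, Finset.sum_eq_single k]
  · simp
  · intro j hj hjk
    simp [hjk]
  · intro hkn
    exact absurd (Finset.mem_Icc.2 ⟨hk0, hk⟩) hkn

noncomputable section

def TAtoms (n : ℕ) : Set (ℝ → ℝ) :=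
  ((fun k : ℕ => fun t : ℝ => Real.cos (k * t)) '' Set.Iic n) ∪
    ((fun k : ℕ => fun t : ℝ => Real.sin (k * t)) '' Set.Iic n)

def TSpan (n : ℕ) : Submodule ℝ (ℝ → ℝ) := Submodule.span ℝ (TAtoms n)

lemma mem_TSpan_isTrig {f : ℝ → ℝ} {n : ℕ} (hf : f ∈ TSpan n) : IsTrigPolyDegLE f n := by
  induction hf using Submodule.span_induction with
  | mem x hx =>
    rcases hx with ⟨k, hk, rfl⟩ | ⟨k, hk, rfl⟩
    · exact trig_atom_cos hk
    · exact trig_atom_sin hk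
  | zero => exact trig_congr (fun t => rfl) (trig_const 0 n)
  | add x y hx hy ihx ihy => exact trig_congr (fun t => rfl) (trig_add ihx ihy)
  | smul c x hx ihx => exact trig_congr (fun t => rfl) (trig_smul c ihx)

lemma isTrig_mem_TSpan {f : ℝ → ℝ} {n : ℕ} (hf : IsTrigPolyDegLE f n) : f ∈ TSpan n := by
  obtain ⟨a, b, h⟩ := hf
  have hf' : f = (a 0 • (fun t : ℝ => Real.cos ((0:ℕ) * t)))
      + ∑ k ∈ Finset.Icc 1 n,
        (a k • (fun t : ℝ => Real.cos (k * t)) + b k • (fun t : ℝ => Real.sin (k * t))) := by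
    funext t
    simp only [Pi.add_apply, Pi.smul_apply, smul_eq_mul, Finset.sum_apply, Nat.cast_zero,
      zero_mul, Real.cos_zero, mul_one]
    exact h t
  rw [hf']
  refine Submodule.add_mem _ (Submodule.smul_mem _ _ (Submodule.subset_span
      (Or.inl ⟨0, Nat.zero_le n, rfl⟩)))
    (Submodule.sum_mem _ fun k hk => Submodule.add_mem _
      (Submodule.smul_mem _ _ (Submodule.subset_span (Or.inl ⟨k, (Finset.mem_Icc.1 hk).2, rfl⟩)))
      (Submodule.smul_mem _ _ (Submodule.subset_span (Or.inr ⟨k, (Finset.mem_Icc.1 hk).2, rfl⟩))))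

lemma cos_sub_nat (j k : ℕ) (t : ℝ) :
    Real.cos ((j:ℝ) * t - (k:ℝ) * t) = Real.cos ((((j - k) + (k - j) : ℕ) : ℝ) * t) := by
  rcases le_total k j with h | h
  · have : ((j - k) + (k - j) : ℕ) = j - k := by omega
    rw [this]
    have : (((j - k : ℕ)) : ℝ) = (j:ℝ) - k := by
      push_cast [Nat.cast_sub h]; ring
    rw [this, sub_mul]
  · have : ((j - k) + (k - j) : ℕ) = k - j := by omega
    rw [this]
    have : (((k - j : ℕ)) : ℝ) = (k:ℝ) - j := by
      push_cast [Nat.cast_sub h]; ring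
    rw [this, sub_mul, show (j:ℝ)*t - (k:ℝ)*t = -((k:ℝ)*t - (j:ℝ)*t) by ring, Real.cos_neg]

lemma sin_sub_nat (j k : ℕ) (t : ℝ) :
    Real.sin ((j:ℝ) * t - (k:ℝ) * t)
      = (if k ≤ j then (1:ℝ) else -1) * Real.sin ((((j - k) + (k - j) : ℕ) : ℝ) * t) := by
  rcases le_or_gt k j with h | h
  · rw [if_pos h]
    have h1 : ((j - k) + (k - j) : ℕ) = j - k := by omega
    have h2 : (((j - k : ℕ)) : ℝ) = (j:ℝ) - k := by push_cast [Nat.cast_sub h]; ring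
    rw [h1, h2, sub_mul, one_mul]
  · rw [if_neg (not_le.2 h)]
    have h1 : ((j - k) + (k - j) : ℕ) = k - j := by omega
    have h2 : (((k - j : ℕ)) : ℝ) = (k:ℝ) - j := by push_cast [Nat.cast_sub h.le]; ring
    rw [h1, h2, sub_mul, show (j:ℝ)*t - (k:ℝ)*t = -((k:ℝ)*t - (j:ℝ)*t) by ring, Real.sin_neg]
    ring

lemma atomc_mem {k n : ℕ} (hk : k ≤ n) : (fun t : ℝ => Real.cos (k * t)) ∈ TSpan n :=
  Submodule.subset_span (Or.inl ⟨k, hk, rfl⟩)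

lemma atoms_mem {k n : ℕ} (hk : k ≤ n) : (fun t : ℝ => Real.sin (k * t)) ∈ TSpan n :=
  Submodule.subset_span (Or.inr ⟨k, hk, rfl⟩)

lemma cos_mul_cos_mem {j k a b : ℕ} (hj : j ≤ a) (hk : k ≤ b) :
    (fun t : ℝ => Real.cos (j * t) * Real.cos (k * t)) ∈ TSpan (a + b) := by
  have hfun : (fun t : ℝ => Real.cos (j * t) * Real.cos (k * t))
      = (1/2 : ℝ) • (fun t : ℝ => Real.cos ((((j - k) + (k - j) : ℕ)) * t))
        + (1/2 : ℝ) • (fun t : ℝ => Real.cos (((j + k : ℕ)) * t)) := by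
    funext t
    simp only [Pi.add_apply, Pi.smul_apply, smul_eq_mul]
    have h2 := Real.two_mul_cos_mul_cos ((j:ℝ)*t) ((k:ℝ)*t)
    rw [cos_sub_nat j k t] at h2
    push_cast at h2 ⊢
    ring_nf at h2 ⊢
    linarith
  rw [hfun]
  exact Submodule.add_mem _
    (Submodule.smul_mem _ _ (atomc_mem (by omega)))
    (Submodule.smul_mem _ _ (atomc_mem (by omega)))

lemma sin_mul_sin_mem {j k a b : ℕ} (hj : j ≤ a) (hk : k ≤ b) :
    (fun t : ℝ => Real.sin (j * t) * Real.sin (k * t)) ∈ TSpan (a + b) := by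
  have hfun : (fun t : ℝ => Real.sin (j * t) * Real.sin (k * t))
      = (1/2 : ℝ) • (fun t : ℝ => Real.cos ((((j - k) + (k - j) : ℕ)) * t))
        + (-(1/2) : ℝ) • (fun t : ℝ => Real.cos (((j + k : ℕ)) * t)) := by
    funext t
    simp only [Pi.add_apply, Pi.smul_apply, smul_eq_mul]
    have h2 := Real.two_mul_sin_mul_sin ((j:ℝ)*t) ((k:ℝ)*t)
    rw [cos_sub_nat j k t] at h2
    push_cast at h2 ⊢
    ring_nf at h2 ⊢
    linarith
  rw [hfun]
  exact Submodule.add_mem _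
    (Submodule.smul_mem _ _ (atomc_mem (by omega)))
    (Submodule.smul_mem _ _ (atomc_mem (by omega)))

lemma sin_mul_cos_mem {j k a b : ℕ} (hj : j ≤ a) (hk : k ≤ b) :
    (fun t : ℝ => Real.sin (j * t) * Real.cos (k * t)) ∈ TSpan (a + b) := by
  have hfun : (fun t : ℝ => Real.sin (j * t) * Real.cos (k * t))
      = ((if k ≤ j then (1:ℝ) else -1)/2 : ℝ) • (fun t : ℝ => Real.sin ((((j - k) + (k - j) : ℕ)) * t))
        + (1/2 : ℝ) • (fun t : ℝ => Real.sin (((j + k : ℕ)) * t)) := by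
    funext t
    simp only [Pi.add_apply, Pi.smul_apply, smul_eq_mul]
    have h2 := Real.two_mul_sin_mul_cos ((j:ℝ)*t) ((k:ℝ)*t)
    rw [sin_sub_nat j k t] at h2
    push_cast at h2 ⊢
    by_cases hkj : k ≤ j
    · simp only [if_pos hkj] at h2 ⊢
      ring_nf at h2 ⊢
      linarith
    · simp only [if_neg hkj] at h2 ⊢
      ring_nf at h2 ⊢
      linarith
  rw [hfun]
  exact Submodule.add_mem _
    (Submodule.smul_mem _ _ (atoms_mem (by omega)))
    (Submodule.smul_mem _ _ (atoms_mem (by omega)))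

lemma cos_mul_sin_mem {j k a b : ℕ} (hj : j ≤ a) (hk : k ≤ b) :
    (fun t : ℝ => Real.cos (j * t) * Real.sin (k * t)) ∈ TSpan (a + b) := by
  have hfun : (fun t : ℝ => Real.cos (j * t) * Real.sin (k * t))
      = (fun t : ℝ => Real.sin (k * t) * Real.cos (j * t)) := funext fun t => mul_comm _ _
  rw [hfun, Nat.add_comm a b]
  exact sin_mul_cos_mem hk hj

lemma atom_mul_mem {a b : ℕ} {A g : ℝ → ℝ} (hA : A ∈ TAtoms a) (hg : g ∈ TSpan b) :
    (fun t => A t * g t) ∈ TSpan (a + b) := by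
  induction hg using Submodule.span_induction with
  | mem x hx =>
    rcases hA with ⟨j, hj, rfl⟩ | ⟨j, hj, rfl⟩ <;>
      rcases hx with ⟨k, hk, rfl⟩ | ⟨k, hk, rfl⟩
    · exact cos_mul_cos_mem hj hk
    · exact cos_mul_sin_mem hj hk
    · exact sin_mul_cos_mem hj hk
    · exact sin_mul_sin_mem hj hk
  | zero =>
    have : (fun t => A t * (0 : ℝ → ℝ) t) = (0 : ℝ → ℝ) := funext fun t => by simp
    rw [this]; exact Submodule.zero_mem _
  | add x y hx hy ihx ihy =>
    have : (fun t => A t * (x + y) t) = (fun t => A t * x t) + (fun t => A t * y t) :=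
      funext fun t => by simp [Pi.add_apply]; ring
    rw [this]; exact Submodule.add_mem _ ihx ihy
  | smul c x hx ihx =>
    have : (fun t => A t * (c • x) t) = c • (fun t => A t * x t) :=
      funext fun t => by simp [Pi.smul_apply, smul_eq_mul]; ring
    rw [this]; exact Submodule.smul_mem _ _ ihx

lemma mul_mem_TSpan {a b : ℕ} {f g : ℝ → ℝ} (hf : f ∈ TSpan a) (hg : g ∈ TSpan b) :
    (fun t => f t * g t) ∈ TSpan (a + b) := by
  induction hf using Submodule.span_induction with
  | mem x hx => exact atom_mul_mem hx hg
  | zero =>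
    have : (fun t => (0 : ℝ → ℝ) t * g t) = (0 : ℝ → ℝ) := funext fun t => by simp
    rw [this]; exact Submodule.zero_mem _
  | add x y hx hy ihx ihy =>
    have : (fun t => (x + y) t * g t) = (fun t => x t * g t) + (fun t => y t * g t) :=
      funext fun t => by simp [Pi.add_apply]; ring
    rw [this]; exact Submodule.add_mem _ ihx ihy
  | smul c x hx ihx =>
    have : (fun t => (c • x) t * g t) = c • (fun t => x t * g t) :=
      funext fun t => by simp [Pi.smul_apply, smul_eq_mul]; ring
    rw [this]; exact Submodule.smul_mem _ _ ihx

lemma trig_mul {a b : ℕ} {f g : ℝ → ℝ} (hf : IsTrigPolyDegLE f a) (hg : IsTrigPolyDegLE g b) :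
    IsTrigPolyDegLE (fun t => f t * g t) (a + b) :=
  mem_TSpan_isTrig (mul_mem_TSpan (isTrig_mem_TSpan hf) (isTrig_mem_TSpan hg))

end


lemma trig_cheb {U : ℝ → ℝ} {N : ℕ} (hU : IsTrigPolyDegLE U N) : ∀ m : ℕ,
    IsTrigPolyDegLE (fun t => (Polynomial.Chebyshev.T ℝ m).eval (U t)) (m * N) := by
  intro m
  induction m using Nat.twoStepInduction with
  | zero =>
    refine trig_congr (fun t => ?_) (trig_const 1 (0*N))
    simp [Polynomial.Chebyshev.T_zero]
  | one =>
    refine trig_congr (fun t => ?_) (trig_mono hU (by omega))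
    simp [Polynomial.Chebyshev.T_one]
  | more m ih1 ih2 =>
    have hcast : ((m + 2 : ℕ) : ℤ) = (m : ℤ) + 2 := by push_cast; ring
    have hrec : ∀ t : ℝ, (Polynomial.Chebyshev.T ℝ (m + 2 : ℕ)).eval (U t)
        = 2 * U t * (Polynomial.Chebyshev.T ℝ (m + 1 : ℕ)).eval (U t)
          - (Polynomial.Chebyshev.T ℝ m).eval (U t) := by
      intro t
      rw [hcast, Polynomial.Chebyshev.T_add_two]
      have : ((m + 1 : ℕ) : ℤ) = (m : ℤ) + 1 := by push_cast; ring
      simp [this]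
      try ring
    refine trig_congr hrec (trig_sub ?_ (trig_mono ih1 (by nlinarith)))
    have h2U : IsTrigPolyDegLE (fun t => 2 * U t) N := trig_smul 2 hU
    have := trig_mul h2U ih2
    refine trig_congr (fun t => rfl) (trig_mono this (by nlinarith))


lemma trig_differentiable {f : ℝ → ℝ} {n : ℕ} (hf : IsTrigPolyDegLE f n) :
    Differentiable ℝ f := by
  obtain ⟨a, b, h⟩ := hf
  rw [show f = fun t => a 0 + ∑ k ∈ Finset.Icc 1 n,
      (a k * Real.cos (k * t) + b k * Real.sin (k * t)) from funext h]
  apply Differentiable.const_add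
  apply Differentiable.fun_sum
  intro k _
  exact ((differentiable_const (a k)).mul (Real.differentiable_cos.comp
      (differentiable_id.const_mul _))).add
    ((differentiable_const (b k)).mul (Real.differentiable_sin.comp
      (differentiable_id.const_mul _)))

lemma sin_cos_rpow_integral {p : ℝ} (hp0 : 0 < p) {m : ℕ} (hm : 1 ≤ m) :
    ∫ x in (0:ℝ)..π, |Real.sin ((m:ℝ) * x)| ^ p
      = ∫ x in (0:ℝ)..π, |Real.cos ((m:ℝ) * x)| ^ p := by
  have hcont_s : Continuous fun x : ℝ => |Real.sin x| ^ p :=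
    (Real.continuous_sin.abs).rpow_const fun x => Or.inr hp0.le
  have hcont_c : Continuous fun x : ℝ => |Real.cos x| ^ p :=
    (Real.continuous_cos.abs).rpow_const fun x => Or.inr hp0.le
  have hint_s : ∀ t₁ t₂ : ℝ, IntervalIntegrable (fun x => |Real.sin x| ^ p)
      MeasureTheory.volume t₁ t₂ := fun t₁ t₂ => hcont_s.intervalIntegrable _ _
  have hint_c : ∀ t₁ t₂ : ℝ, IntervalIntegrable (fun x => |Real.cos x| ^ p)
      MeasureTheory.volume t₁ t₂ := fun t₁ t₂ => hcont_c.intervalIntegrable _ _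
  have hper_s : Function.Periodic (fun x : ℝ => |Real.sin x| ^ p) π := fun x => by
    simp [Real.sin_add_pi]
  have hper_c : Function.Periodic (fun x : ℝ => |Real.cos x| ^ p) π := fun x => by
    simp [Real.cos_add_pi]
  have hm0 : ((m:ℝ)) ≠ 0 := by positivity
  have hA : ((m:ℝ)) • ∫ x in (0:ℝ)..π, |Real.sin ((m:ℝ) * x)| ^ p
      = ∫ x in (0:ℝ)..((m:ℝ)*π), |Real.sin x| ^ p := by
    simpa using intervalIntegral.smul_integral_comp_mul_left
      (a := (0:ℝ)) (b := π) (fun x => |Real.sin x| ^ p) (m:ℝ)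
  have hA' : ((m:ℝ)) • ∫ x in (0:ℝ)..π, |Real.cos ((m:ℝ) * x)| ^ p
      = ∫ x in (0:ℝ)..((m:ℝ)*π), |Real.cos x| ^ p := by
    simpa using intervalIntegral.smul_integral_comp_mul_left
      (a := (0:ℝ)) (b := π) (fun x => |Real.cos x| ^ p) (m:ℝ)
  have hB : ∫ x in (0:ℝ)..((m:ℝ)*π), |Real.sin x| ^ p
      = (m:ℝ) * ∫ x in (0:ℝ)..π, |Real.sin x| ^ p := by
    have := hper_s.intervalIntegral_add_zsmul_eq (m:ℤ) 0 hint_s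
    simpa [zsmul_eq_mul] using this
  have hB' : ∫ x in (0:ℝ)..((m:ℝ)*π), |Real.cos x| ^ p
      = (m:ℝ) * ∫ x in (0:ℝ)..π, |Real.cos x| ^ p := by
    have := hper_c.intervalIntegral_add_zsmul_eq (m:ℤ) 0 hint_c
    simpa [zsmul_eq_mul] using this
  have hsc : ∫ x in (0:ℝ)..π, |Real.cos x| ^ p = ∫ x in (0:ℝ)..π, |Real.sin x| ^ p := by
    have h1 : ∫ x in (0:ℝ)..π, |Real.cos x| ^ p
        = ∫ x in (0:ℝ)..π, |Real.sin (x + π/2)| ^ p := by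
      simp [Real.sin_add_pi_div_two]
    rw [h1, intervalIntegral.integral_comp_add_right (fun x => |Real.sin x| ^ p) (π/2)]
    have h2 := hper_s.intervalIntegral_add_eq (π/2) 0
    simpa [zero_add, add_comm] using h2
  have e1 : (m:ℝ) * ∫ x in (0:ℝ)..π, |Real.sin ((m:ℝ)*x)|^p
      = (m:ℝ) * ∫ x in (0:ℝ)..π, |Real.cos ((m:ℝ)*x)|^p := by
    rw [← smul_eq_mul, ← smul_eq_mul, hA, hA', hB, hB', hsc]
  exact mul_left_cancel₀ hm0 e1

noncomputable def Fa (p : ℝ) (N n m : ℕ) (u : ℝ) : ℝ :=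
  ((N:ℝ)/n * |(Polynomial.derivative (Polynomial.Chebyshev.T ℝ (m:ℤ))).eval u|
      * Real.sqrt (1 - u^2)) ^ p / (2*π*N*Real.sqrt (1 - u^2))

noncomputable def Ga (p : ℝ) (N m : ℕ) (u : ℝ) : ℝ :=
  |(Polynomial.Chebyshev.T ℝ (m:ℤ)).eval u| ^ p / (2*π*N*Real.sqrt (1 - u^2))

lemma pointA {p : ℝ} (hp0 : 0 < p) {N n m : ℕ} (hN : 0 < N) (hn : 1 ≤ n) {u v : ℝ}
    (hu1 : -1 ≤ u) (hu2 : u ≤ 1) :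
    |(Polynomial.derivative (Polynomial.Chebyshev.T ℝ (m:ℤ))).eval u * v
        / ((n:ℝ) * (2*π) * (|v| / (2*π*N*Real.sqrt (1 - u^2))))| ^ p
      * (|v| / (2*π*N*Real.sqrt (1 - u^2))) = |v| * Fa p N n m u := by
  have hπ := Real.pi_pos
  unfold Fa
  set d := (Polynomial.derivative (Polynomial.Chebyshev.T ℝ (m:ℤ))).eval u with hd
  have hs0 : 0 ≤ 1 - u^2 := by nlinarith
  set s := Real.sqrt (1 - u^2) with hs
  have hsnn : 0 ≤ s := Real.sqrt_nonneg _
  rcases eq_or_lt_of_le hsnn with hs0' | hspos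
  · rw [← hs0']
    simp [Real.zero_rpow hp0.ne']
  · have hsne : s ≠ 0 := hspos.ne'
    rcases eq_or_lt_of_le (abs_nonneg v) with hv0 | hvpos
    · rw [← hv0]
      have hv : v = 0 := abs_eq_zero.1 hv0.symm
      rw [hv]
      simp [Real.zero_rpow hp0.ne']
    · have hvne : |v| ≠ 0 := hvpos.ne'
      have hnne : (n:ℝ) ≠ 0 := by positivity
      have hNne : (N:ℝ) ≠ 0 := by positivity
      have h1 : (n:ℝ) * (2*π) * (|v| / (2*π*N*s)) = (n:ℝ) * |v| / (N * s) := by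
        field_simp
      rw [h1]
      have h2 : |d * v / ((n:ℝ)*|v|/((N:ℝ)*s))| = (N:ℝ)/n * |d| * s := by
        rw [abs_div, abs_mul, abs_of_pos (show (0:ℝ) < (n:ℝ)*|v|/((N:ℝ)*s) by positivity)]
        field_simp
      rw [h2]
      ring

lemma pointB {p : ℝ} (hp0 : 0 < p) {N m : ℕ} (hN : 0 < N) {u v : ℝ}
    (hu1 : -1 ≤ u) (hu2 : u ≤ 1) :
    |(Polynomial.Chebyshev.T ℝ (m:ℤ)).eval u| ^ p * (|v| / (2*π*N*Real.sqrt (1 - u^2)))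
      = |v| * Ga p N m u := by
  unfold Ga
  ring

lemma pointFcos {p : ℝ} (hp0 : 0 < p) {N n m : ℕ} (hN : 0 < N) (hn : 1 ≤ n) {θ : ℝ}
    (h1 : 0 < θ) (h2 : θ < π) :
    |(-Real.sin θ)| * Fa p N n m (Real.cos θ)
      = ((((m*N:ℕ)):ℝ)/n) ^ p * |Real.sin ((m:ℝ)*θ)| ^ p / (2*π*N) := by
  have hπ := Real.pi_pos
  have hsin : 0 < Real.sin θ := Real.sin_pos_of_pos_of_lt_pi h1 h2
  have hnne : (n:ℝ) ≠ 0 := by positivity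
  have hNne : (N:ℝ) ≠ 0 := by positivity
  unfold Fa
  rw [show (1 - Real.cos θ^2) = Real.sin θ^2 by rw [Real.sin_sq], Real.sqrt_sq hsin.le]
  rw [abs_neg, abs_of_pos hsin]
  have hDer : (Polynomial.derivative (Polynomial.Chebyshev.T ℝ (m:ℤ))).eval (Real.cos θ)
      * Real.sin θ = (m:ℝ) * Real.sin ((m:ℝ)*θ) := by
    rw [Polynomial.Chebyshev.T_derivative_eq_U]
    have hU := Polynomial.Chebyshev.U_real_cos θ ((m:ℤ)-1)
    push_cast at hU
    rw [show ((m:ℝ) - 1 + 1) = (m:ℝ) by ring] at hU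
    rw [Polynomial.eval_mul, Polynomial.eval_intCast]
    push_cast
    rw [mul_assoc, hU]
  have habs : |(Polynomial.derivative (Polynomial.Chebyshev.T ℝ (m:ℤ))).eval (Real.cos θ)|
      * Real.sin θ = (m:ℝ) * |Real.sin ((m:ℝ)*θ)| := by
    rw [← abs_of_pos hsin, ← abs_mul, hDer, abs_mul, abs_of_nonneg (by positivity : (0:ℝ) ≤ (m:ℝ))]
  have hinner : (N:ℝ)/n
      * |(Polynomial.derivative (Polynomial.Chebyshev.T ℝ (m:ℤ))).eval (Real.cos θ)|
      * Real.sin θ = (((m*N:ℕ)):ℝ)/n * |Real.sin ((m:ℝ)*θ)| := by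
    rw [mul_assoc, habs]
    push_cast
    ring
  rw [hinner, Real.mul_rpow (by positivity) (abs_nonneg _)]
  field_simp

lemma pointGcos {p : ℝ} (hp0 : 0 < p) {N m : ℕ} (hN : 0 < N) {θ : ℝ}
    (h1 : 0 < θ) (h2 : θ < π) :
    |(-Real.sin θ)| * Ga p N m (Real.cos θ) = |Real.cos ((m:ℝ)*θ)| ^ p / (2*π*N) := by
  have hπ := Real.pi_pos
  have hsin : 0 < Real.sin θ := Real.sin_pos_of_pos_of_lt_pi h1 h2
  have hNne : (N:ℝ) ≠ 0 := by positivity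
  unfold Ga
  rw [show (1 - Real.cos θ^2) = Real.sin θ^2 by rw [Real.sin_sq], Real.sqrt_sq hsin.le]
  rw [abs_neg, abs_of_pos hsin, Polynomial.Chebyshev.T_real_cos]
  push_cast
  field_simp


lemma key {p : ℝ} (hp0 : 0 < p) {E : Set ℝ} {N : ℕ} {U : ℝ → ℝ}
    {B : Fin (2*N) → Set ℝ} (hTS : IsTSetWithBranches E N U B) {m n : ℕ}
    (hm : 1 ≤ m) (hn : 1 ≤ n) :
    Aint p N U n (fun t => (Polynomial.Chebyshev.T ℝ (m:ℤ)).eval (U t)) E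
      = (((m * N : ℕ) : ℝ) / (n:ℝ)) ^ p
        * Bint p N U (fun t => (Polynomial.Chebyshev.T ℝ (m:ℤ)).eval (U t)) E := by
  obtain ⟨hN, hUeq, hEchar, hBicc, hBdisj, hEunion, hBmono, hBimg⟩ := hTS
  have hπ := Real.pi_pos
  have hNR : (0:ℝ) < N := by exact_mod_cast hN
  have hULE : IsTrigPolyDegLE U N := by
    obtain ⟨a, b, _, h⟩ := hUeq; exact ⟨a, b, h⟩
  have hUdiff : Differentiable ℝ U := trig_differentiable hULE
  have hTd : ∀ t : ℝ, deriv (fun s : ℝ => (Polynomial.Chebyshev.T ℝ (m:ℤ)).eval (U s)) t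
      = (Polynomial.derivative (Polynomial.Chebyshev.T ℝ (m:ℤ))).eval (U t) * deriv U t :=
    fun t => ((Polynomial.hasDerivAt (Polynomial.Chebyshev.T ℝ (m:ℤ)) (U t)).comp t
      (hUdiff t).hasDerivAt).deriv
  have hBmeas : ∀ h, MeasurableSet (B h) := by
    intro h; obtain ⟨x, y, _, hxy⟩ := hBicc h; rw [hxy]; exact measurableSet_Icc
  have hEmeas : MeasurableSet E := by
    rw [hEunion]; exact MeasurableSet.iUnion fun h => hBmeas h
  have hUmem : ∀ t ∈ E, -1 ≤ U t ∧ U t ≤ 1 := by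
    intro t ht
    rw [hEchar] at ht
    exact ⟨ht.2.1, ht.2.2⟩
  have hBsub : ∀ (H : ℝ → ℝ) (h : Fin (2*N)),
      ∫ u in Set.Icc (-1:ℝ) 1, H u = ∫ t in B h, |deriv U t| * H (U t) := by
    intro H h
    rw [← hBimg h, MeasureTheory.integral_image_eq_integral_abs_deriv_smul (hBmeas h)
      (fun x _ => (hUdiff x).hasDerivAt.hasDerivWithinAt)
      (by rcases hBmono h with hmono | hanti
          · exact hmono.injOn
          · exact hanti.injOn) H]
    simp only [smul_eq_mul]
  have hBsubInt : ∀ (H : ℝ → ℝ) (h : Fin (2*N)),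
      MeasureTheory.IntegrableOn H (Set.Icc (-1:ℝ) 1) ↔
        MeasureTheory.IntegrableOn (fun t => |deriv U t| * H (U t)) (B h) := by
    intro H h
    rw [← hBimg h, MeasureTheory.integrableOn_image_iff_integrableOn_abs_deriv_smul (hBmeas h)
      (fun x _ => (hUdiff x).hasDerivAt.hasDerivWithinAt)
      (by rcases hBmono h with hmono | hanti
          · exact hmono.injOn
          · exact hanti.injOn) H]
    simp only [smul_eq_mul]
  have hcossub : ∀ H : ℝ → ℝ,
      ∫ u in Set.Icc (-1:ℝ) 1, H u
        = ∫ θ in Set.Icc 0 π, |(-Real.sin θ)| * H (Real.cos θ) := by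
    intro H
    rw [← Real.bijOn_cos.image_eq, MeasureTheory.integral_image_eq_integral_abs_deriv_smul
      measurableSet_Icc (fun x _ => (Real.hasDerivAt_cos x).hasDerivWithinAt)
      Real.injOn_cos H]
    simp only [smul_eq_mul]
  have hcossubInt : ∀ H : ℝ → ℝ,
      MeasureTheory.IntegrableOn H (Set.Icc (-1:ℝ) 1) ↔
        MeasureTheory.IntegrableOn (fun θ => |(-Real.sin θ)| * H (Real.cos θ))
          (Set.Icc 0 π) := by
    intro H
    rw [← Real.bijOn_cos.image_eq,
      MeasureTheory.integrableOn_image_iff_integrableOn_abs_deriv_smul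
      measurableSet_Icc (fun x _ => (Real.hasDerivAt_cos x).hasDerivWithinAt)
      Real.injOn_cos H]
    simp only [smul_eq_mul]
  set c : ℝ := ((m * N : ℕ) : ℝ) / (n:ℝ) with hc
  set Ssin : ℝ := ∫ θ in Set.Icc (0:ℝ) π, |Real.sin ((m:ℝ)*θ)| ^ p with hSsin
  set Scos : ℝ := ∫ θ in Set.Icc (0:ℝ) π, |Real.cos ((m:ℝ)*θ)| ^ p with hScos
  have hIccInterval : ∀ f : ℝ → ℝ, ∫ θ in Set.Icc (0:ℝ) π, f θ = ∫ θ in (0:ℝ)..π, f θ := by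
    intro f
    rw [intervalIntegral.integral_of_le Real.pi_pos.le,
      MeasureTheory.integral_Icc_eq_integral_Ioo, MeasureTheory.integral_Ioc_eq_integral_Ioo]
  have hSS : Ssin = Scos := by
    rw [hSsin, hScos, hIccInterval, hIccInterval]
    exact sin_cos_rpow_integral hp0 hm
  have hIF : ∫ u in Set.Icc (-1:ℝ) 1, Fa p N n m u = c ^ p / (2*π*N) * Ssin := by
    rw [hcossub (Fa p N n m), MeasureTheory.integral_Icc_eq_integral_Ioo]
    have he : ∫ θ in Set.Ioo (0:ℝ) π, |(-Real.sin θ)| * Fa p N n m (Real.cos θ)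
        = ∫ θ in Set.Ioo (0:ℝ) π, c ^ p / (2*π*N) * |Real.sin ((m:ℝ)*θ)| ^ p :=
      MeasureTheory.setIntegral_congr_fun measurableSet_Ioo
        (fun θ hθ => (pointFcos hp0 hN hn hθ.1 hθ.2).trans (by rw [hc]; ring))
    rw [he, MeasureTheory.integral_const_mul, ← MeasureTheory.integral_Icc_eq_integral_Ioo]
  have hIG : ∫ u in Set.Icc (-1:ℝ) 1, Ga p N m u = 1 / (2*π*N) * Scos := by
    rw [hcossub (Ga p N m), MeasureTheory.integral_Icc_eq_integral_Ioo]
    have he : ∫ θ in Set.Ioo (0:ℝ) π, |(-Real.sin θ)| * Ga p N m (Real.cos θ)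
        = ∫ θ in Set.Ioo (0:ℝ) π, 1 / (2*π*N) * |Real.cos ((m:ℝ)*θ)| ^ p :=
      MeasureTheory.setIntegral_congr_fun measurableSet_Ioo
        (fun θ hθ => (pointGcos hp0 hN hθ.1 hθ.2).trans (by ring))
    rw [he, MeasureTheory.integral_const_mul, ← MeasureTheory.integral_Icc_eq_integral_Ioo]
  -- integrability
  have hcontF : Continuous fun θ : ℝ => c ^ p / (2*π*(N:ℝ)) * |Real.sin ((m:ℝ)*θ)| ^ p :=
    continuous_const.mul (((Real.continuous_sin.comp
      (continuous_const.mul continuous_id)).abs).rpow_const (fun x => Or.inr hp0.le))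
  have hcontG : Continuous fun θ : ℝ => 1 / (2*π*(N:ℝ)) * |Real.cos ((m:ℝ)*θ)| ^ p :=
    continuous_const.mul (((Real.continuous_cos.comp
      (continuous_const.mul continuous_id)).abs).rpow_const (fun x => Or.inr hp0.le))
  have hIntFcos : MeasureTheory.IntegrableOn
      (fun θ => |(-Real.sin θ)| * Fa p N n m (Real.cos θ)) (Set.Icc 0 π) := by
    rw [integrableOn_Icc_iff_integrableOn_Ioo]
    exact ((hcontF.integrableOn_Icc (a := 0) (b := π)).mono_set
        Set.Ioo_subset_Icc_self).congr_fun
      (fun θ hθ => ((pointFcos hp0 hN hn hθ.1 hθ.2).trans (by rw [hc]; ring)).symm)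
      measurableSet_Ioo
  have hIntGcos : MeasureTheory.IntegrableOn
      (fun θ => |(-Real.sin θ)| * Ga p N m (Real.cos θ)) (Set.Icc 0 π) := by
    rw [integrableOn_Icc_iff_integrableOn_Ioo]
    exact ((hcontG.integrableOn_Icc (a := 0) (b := π)).mono_set
        Set.Ioo_subset_Icc_self).congr_fun
      (fun θ hθ => ((pointGcos hp0 hN hθ.1 hθ.2).trans (by ring)).symm)
      measurableSet_Ioo
  have hIntF : MeasureTheory.IntegrableOn (Fa p N n m) (Set.Icc (-1:ℝ) 1) :=
    (hcossubInt _).mpr hIntFcos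
  have hIntG : MeasureTheory.IntegrableOn (Ga p N m) (Set.Icc (-1:ℝ) 1) :=
    (hcossubInt _).mpr hIntGcos
  have hIntFE : MeasureTheory.IntegrableOn (fun t => |deriv U t| * Fa p N n m (U t)) E := by
    rw [hEunion, MeasureTheory.integrableOn_finite_iUnion]
    exact fun h => (hBsubInt _ h).mp hIntF
  have hIntGE : MeasureTheory.IntegrableOn (fun t => |deriv U t| * Ga p N m (U t)) E := by
    rw [hEunion, MeasureTheory.integrableOn_finite_iUnion]
    exact fun h => (hBsubInt _ h).mp hIntG
  have hdisj : Pairwise (Function.onFun (MeasureTheory.AEDisjoint MeasureTheory.volume) B) := by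
    intro h h' hne
    obtain ⟨x, y, hxy, hB⟩ := hBicc h
    obtain ⟨x', y', hxy', hB'⟩ := hBicc h'
    have hint := hBdisj h h' hne
    rw [hB, hB', interior_Icc, interior_Icc] at hint
    show MeasureTheory.volume (B h ∩ B h') = 0
    rw [hB, hB', Set.Icc_inter_Icc, Real.volume_Icc]
    refine ENNReal.ofReal_eq_zero.2 ?_
    rw [sub_nonpos]
    by_contra hcon
    push_neg at hcon
    obtain ⟨z, hz1, hz2⟩ := Set.nonempty_Ioo.2 hcon
    have hzmem : z ∈ Set.Ioo x y ∩ Set.Ioo x' y' :=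
      ⟨⟨(le_max_left _ _).trans_lt hz1, hz2.trans_le (min_le_left _ _)⟩,
       ⟨(le_max_right _ _).trans_lt hz1, hz2.trans_le (min_le_right _ _)⟩⟩
    rw [hint] at hzmem
    exact hzmem
  have hsumF : ∫ t in E, |deriv U t| * Fa p N n m (U t)
      = (2*(N:ℝ)) * ∫ u in Set.Icc (-1:ℝ) 1, Fa p N n m u := by
    rw [hEunion, MeasureTheory.integral_iUnion_ae (fun h => (hBmeas h).nullMeasurableSet) hdisj
      (hEunion ▸ hIntFE), tsum_fintype,
      Finset.sum_congr rfl (fun h _ => (hBsub (Fa p N n m) h).symm),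
      Finset.sum_const, Finset.card_univ, Fintype.card_fin, nsmul_eq_mul]
    push_cast
    ring
  have hsumG : ∫ t in E, |deriv U t| * Ga p N m (U t)
      = (2*(N:ℝ)) * ∫ u in Set.Icc (-1:ℝ) 1, Ga p N m u := by
    rw [hEunion, MeasureTheory.integral_iUnion_ae (fun h => (hBmeas h).nullMeasurableSet) hdisj
      (hEunion ▸ hIntGE), tsum_fintype,
      Finset.sum_congr rfl (fun h _ => (hBsub (Ga p N m) h).symm),
      Finset.sum_const, Finset.card_univ, Fintype.card_fin, nsmul_eq_mul]
    push_cast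
    ring
  have hAeq : Aint p N U n (fun t => (Polynomial.Chebyshev.T ℝ (m:ℤ)).eval (U t)) E
      = ∫ t in E, |deriv U t| * Fa p N n m (U t) := by
    unfold Aint
    refine MeasureTheory.setIntegral_congr_fun hEmeas (fun t ht => ?_)
    obtain ⟨hu1, hu2⟩ := hUmem t ht
    simp only [eqDensity]
    rw [hTd t]
    exact pointA hp0 hN hn hu1 hu2
  have hBeq : Bint p N U (fun t => (Polynomial.Chebyshev.T ℝ (m:ℤ)).eval (U t)) E
      = ∫ t in E, |deriv U t| * Ga p N m (U t) := by
    unfold Bint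
    refine MeasureTheory.setIntegral_congr_fun hEmeas (fun t ht => ?_)
    obtain ⟨hu1, hu2⟩ := hUmem t ht
    simp only [eqDensity]
    exact pointB hp0 hN hu1 hu2
  rw [hAeq, hBeq, hsumF, hsumG, hIF, hIG, hSS]
  ring


end TPAux

/-- Sharpness of the `L^p` Bernstein inequality on T-sets for `0 < p < 1`. -/
theorem lp_bernstein_on_Tset_sharpness
    (p : ℝ) (hp0 : 0 < p) (hp1 : p < 1)
    (E : Set ℝ) (N : ℕ) (U : ℝ → ℝ) (hE : IsTSet E N U) :
    ∃ (T : ℕ → ℝ → ℝ) (ε : ℕ → ℝ), Filter.Tendsto ε Filter.atTop (nhds 0) ∧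
      ∀ n : ℕ, IsTrigPolyDegLE (T n) n ∧ (∃ t ∈ E, T n t ≠ 0) ∧
        Aint p N U n (T n) E ≥ (1 - ε n) * Bint p N U (T n) E := by
  obtain ⟨B, hTS⟩ := hE
  have hTS' := hTS
  obtain ⟨hN, hUeq, hEchar, hBicc, hBdisj, hEunion, hBmono, hBimg⟩ := hTS
  have hULE : IsTrigPolyDegLE U N := by
    obtain ⟨a, b, _, h⟩ := hUeq; exact ⟨a, b, h⟩
  refine ⟨fun n => fun t => (Polynomial.Chebyshev.T ℝ ((n / N : ℕ) : ℤ)).eval (U t),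
    fun n => 1 - (((n / N * N : ℕ) : ℝ) / (n:ℝ)) ^ p, ?_, ?_⟩
  · -- convergence of ε to 0
    have h1 : Filter.Tendsto (fun n : ℕ => (((n / N * N : ℕ) : ℝ) / (n:ℝ)))
        Filter.atTop (nhds 1) := by
      apply tendsto_of_tendsto_of_tendsto_of_le_of_le' (g := fun n : ℕ => 1 - (N:ℝ)/(n:ℝ))
        (h := fun _ : ℕ => (1:ℝ))
      · have h0 : Filter.Tendsto (fun n : ℕ => (N:ℝ)/(n:ℝ)) Filter.atTop (nhds 0) :=
          tendsto_const_div_atTop_nhds_zero_nat (N:ℝ)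
        have := h0.const_sub 1
        simpa using this
      · exact tendsto_const_nhds
      · filter_upwards [Filter.eventually_ge_atTop 1] with n hn
        have hnR : (0:ℝ) < (n:ℝ) := by exact_mod_cast hn
        have hx : (n:ℝ) - N ≤ ((n / N * N : ℕ):ℝ) := by
          have h2 : n ≤ n / N * N + N := (Nat.lt_div_mul_add hN).le
          have h3 : ((n:ℝ)) ≤ ((n / N * N : ℕ):ℝ) + N := by exact_mod_cast h2
          linarith
        rw [show (1 : ℝ) - (N:ℝ)/(n:ℝ) = ((n:ℝ) - N)/(n:ℝ) by field_simp]
        exact (div_le_div_iff_of_pos_right hnR).2 hx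
      · filter_upwards [Filter.eventually_ge_atTop 1] with n hn
        have hnR : (0:ℝ) < (n:ℝ) := by exact_mod_cast hn
        rw [div_le_one hnR]
        exact_mod_cast Nat.div_mul_le_self n N
    have h2 := h1.rpow_const (Or.inr hp0.le)
    rw [Real.one_rpow] at h2
    have h3 := h2.const_sub 1
    simpa using h3
  · intro n
    dsimp only
    refine ⟨TPAux.trig_mono (TPAux.trig_cheb hULE (n / N)) (Nat.div_mul_le_self n N), ?_, ?_⟩
    · -- nonvanishing
      have hlt : 0 < 2 * N := by omega
      let i : Fin (2*N) := ⟨0, hlt⟩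
      have h1mem : (1:ℝ) ∈ U '' B i := by
        rw [hBimg i]; norm_num
      obtain ⟨t0, ht0, hUt0⟩ := h1mem
      refine ⟨t0, by rw [hEunion]; exact Set.mem_iUnion.2 ⟨i, ht0⟩, ?_⟩
      show (Polynomial.Chebyshev.T ℝ ((n / N : ℕ) : ℤ)).eval (U t0) ≠ 0
      rw [hUt0]
      have hT1 := Polynomial.Chebyshev.T_real_cos 0 ((n/N : ℕ):ℤ)
      rw [Real.cos_zero, mul_zero, Real.cos_zero] at hT1
      rw [hT1]
      exact one_ne_zero
    · -- the inequality
      rcases Nat.eq_zero_or_pos (n / N) with hq | hq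
      · have hT0 : (fun t => (Polynomial.Chebyshev.T ℝ ((n / N : ℕ) : ℤ)).eval (U t))
            = fun _ : ℝ => (1:ℝ) := by
          funext t
          rw [hq]
          simp [Polynomial.Chebyshev.T_zero]
        rw [hT0]
        have hA0 : Aint p N U n (fun _ : ℝ => (1:ℝ)) E = 0 := by
          unfold Aint
          have hz : ∀ t : ℝ, |deriv (fun _ : ℝ => (1:ℝ)) t
              / ((n:ℝ) * (2*π) * eqDensity N U t)| ^ p * eqDensity N U t = 0 := by
            intro t
            rw [deriv_const']
            simp [Real.zero_rpow hp0.ne']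
          simp only [hz]
          simp
        rw [hA0, hq]
        have : ((0 * N : ℕ) : ℝ) / (n:ℝ) = 0 := by simp
        rw [this]
        rw [Real.zero_rpow hp0.ne']
        simp
      · have hnN : N ≤ n := (Nat.one_le_div_iff hN).1 hq
        have hn1 : 1 ≤ n := le_trans hN hnN
        have hkey := TPAux.key hp0 hTS' hq hn1
        rw [ge_iff_le, show (1 - (1 - (((n / N * N : ℕ) : ℝ) / (n:ℝ)) ^ p))
          = (((n / N * N : ℕ) : ℝ) / (n:ℝ)) ^ p by ring]
        exact le_of_eq hkey.symm
end

section
/- (Symmetrization) Let E ⊆ [0, 2π) be a T-set of order N with defining polynomial U and branches B₁, …, B_{2N}. For a point t ∈ E with U(t) ∈ (−1, 1), let t₁, …, t_{2N} be defined by t_h = (U restricted to B_h)^{−1}(U(t)), i.e. the 2N points of E satisfying U(t_h) = U(t). If V is a real trigonometric polynomial of degree at most n, then there exists an algebraic polynomial S of degree at most n/N such that Σ_{h=1}^{2N} V(t_h) = S(U(t)) for every t ∈ E with U(t) ∈ (−1, 1). -/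
open Real MeasureTheory Set Filter

section SymmAux


open Polynomial in
lemma key_trig (A B θ : ℝ) :
    ((A : ℂ) - B * Complex.I) / 2 * Complex.exp (θ * Complex.I) ^ 2
      + ((A : ℂ) + B * Complex.I) / 2
    = Complex.exp (θ * Complex.I) * ((A * Real.cos θ + B * Real.sin θ : ℝ) : ℂ) := by
  rw [Complex.exp_mul_I]
  have h : Complex.cos θ ^ 2 + Complex.sin θ ^ 2 = 1 := Complex.cos_sq_add_sin_sq θ
  push_cast
  linear_combination (-((A:ℂ) + B * Complex.I) / 2) * h +
    ((A:ℂ) * Complex.sin θ ^ 2 / 2 - B * Complex.cos θ * Complex.sin θ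
      - B * Complex.I * Complex.sin θ ^ 2 / 2) * Complex.I_sq

noncomputable def Qpoly (N : ℕ) (a b : ℕ → ℝ) (u : ℂ) : Polynomial ℂ :=
  Polynomial.C ((a 0 : ℂ) - u) * Polynomial.X ^ N +
    ∑ k ∈ Finset.Icc 1 N,
      (Polynomial.C (((a k : ℂ) - b k * Complex.I) / 2) * Polynomial.X ^ (N + k) +
       Polynomial.C (((a k : ℂ) + b k * Complex.I) / 2) * Polynomial.X ^ (N - k))

lemma Qpoly_eval (N : ℕ) (a b : ℕ → ℝ) (u : ℂ) (t : ℝ) :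
    (Qpoly N a b u).eval (Complex.exp (t * Complex.I)) =
      Complex.exp (t * Complex.I) ^ N *
        (((a 0 + ∑ k ∈ Finset.Icc 1 N,
            (a k * Real.cos (k * t) + b k * Real.sin (k * t)) : ℝ) : ℂ) - u) := by
  set z := Complex.exp (t * Complex.I) with hz
  have hterm : ∀ k ∈ Finset.Icc 1 N,
      ((a k : ℂ) - b k * Complex.I) / 2 * z ^ (N + k)
        + ((a k : ℂ) + b k * Complex.I) / 2 * z ^ (N - k)
      = z ^ N * ((a k * Real.cos (k * t) + b k * Real.sin (k * t) : ℝ) : ℂ) := by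
    intro k hk
    have hkN : k ≤ N := (Finset.mem_Icc.mp hk).2
    have hzk : z ^ k = Complex.exp ((k * t : ℝ) * Complex.I) := by
      rw [hz, ← Complex.exp_nat_mul]
      push_cast
      ring_nf
    have hkey := key_trig (a k) (b k) (k * t)
    have h1 : z ^ (N + k) = z ^ (N - k) * (z ^ k) ^ 2 := by
      rw [← pow_mul, ← pow_add]
      congr 1
      omega
    have h2 : z ^ N = z ^ (N - k) * z ^ k := by
      rw [← pow_add]; congr 1; omega
    rw [h1, h2, hzk, mul_assoc]
    rw [← hkey]
    ring
  simp only [Qpoly, Polynomial.eval_add, Polynomial.eval_mul, Polynomial.eval_C,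
    Polynomial.eval_pow, Polynomial.eval_X, Polynomial.eval_finset_sum]
  rw [Finset.sum_congr rfl hterm]
  rw [← Finset.mul_sum]
  push_cast
  ring




lemma Qpoly_coeff_top {N : ℕ} (hN : 0 < N) (a b : ℕ → ℝ) (u : ℂ) :
    (Qpoly N a b u).coeff (2 * N) = ((a N : ℂ) - b N * Complex.I) / 2 := by
  simp only [Qpoly, Polynomial.coeff_add, Polynomial.coeff_C_mul, Polynomial.coeff_X_pow,
    Polynomial.finset_sum_coeff, Finset.sum_add_distrib]
  rw [Finset.sum_eq_single N, Finset.sum_eq_zero (fun k hk => ?_)]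
  · have h1 : ¬ (2 * N = N) := by omega
    have h2 : (2 * N = N + N) := by omega
    simp [h1, h2]
    intro h; exact absurd h (by omega)
  · have hk' := Finset.mem_Icc.mp hk
    have h1 : ¬ (2 * N = N - k) := by omega
    simp [h1]
  · intro k hk hkN
    have hk' := Finset.mem_Icc.mp hk
    have h1 : ¬ (2 * N = N + k) := by omega
    have h2 : ¬ (2 * N = N - k) := by omega
    simp [h1, h2]
  · intro h
    simp at h
    omega

lemma Qpoly_sub (N : ℕ) (a b : ℕ → ℝ) (u : ℂ) :
    Qpoly N a b u = Qpoly N a b 0 - Polynomial.C u * Polynomial.X ^ N := by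
  simp only [Qpoly, map_sub, map_zero, sub_zero]
  ring

lemma Qpoly_natDegree_le (N : ℕ) (a b : ℕ → ℝ) (u : ℂ) :
    (Qpoly N a b u).natDegree ≤ 2 * N := by
  apply le_trans (Polynomial.natDegree_add_le _ _)
  apply max_le
  · apply le_trans (Polynomial.natDegree_C_mul_le _ _)
    simp [Polynomial.natDegree_X_pow]; omega
  · apply Polynomial.natDegree_sum_le_of_forall_le
    intro k hk
    have hk' := Finset.mem_Icc.mp hk
    apply le_trans (Polynomial.natDegree_add_le _ _)
    apply max_le <;> apply le_trans (Polynomial.natDegree_C_mul_le _ _) <;>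
      simp [Polynomial.natDegree_X_pow] <;> omega

lemma Qpoly_natDegree {N : ℕ} (hN : 0 < N) {a b : ℕ → ℝ}
    (hlead : ((a N : ℂ) - b N * Complex.I) / 2 ≠ 0) (u : ℂ) :
    (Qpoly N a b u).natDegree = 2 * N := by
  refine le_antisymm (Qpoly_natDegree_le N a b u) ?_
  apply Polynomial.le_natDegree_of_ne_zero
  rw [Qpoly_coeff_top hN a b u]
  exact hlead

lemma Qpoly_ne_zero {N : ℕ} (hN : 0 < N) {a b : ℕ → ℝ}
    (hlead : ((a N : ℂ) - b N * Complex.I) / 2 ≠ 0) (u : ℂ) :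
    Qpoly N a b u ≠ 0 := by
  intro h
  apply hlead
  rw [← Qpoly_coeff_top hN a b u, h]
  simp

lemma Qpoly_card_roots {N : ℕ} (hN : 0 < N) {a b : ℕ → ℝ}
    (hlead : ((a N : ℂ) - b N * Complex.I) / 2 ≠ 0) (u : ℂ) :
    Multiset.card (Qpoly N a b u).roots = 2 * N := by
  rw [← Qpoly_natDegree hN hlead u]
  exact (Polynomial.splits_iff_card_roots.mp (IsAlgClosed.splits _))

lemma esymm_eq_zero_of_card_lt {s : Multiset ℂ} {j : ℕ} (h : Multiset.card s < j) :
    s.esymm j = 0 := by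
  simp [Multiset.esymm, Multiset.powersetCard_eq_empty _ h]

lemma Qpoly_esymm {N : ℕ} (hN : 0 < N) {a b : ℕ → ℝ}
    (hlead : ((a N : ℂ) - b N * Complex.I) / 2 ≠ 0) (u : ℂ) {j : ℕ} (hj : j ≤ 2 * N) :
    (Qpoly N a b u).roots.esymm j =
      (-1) ^ j * ((Qpoly N a b 0).coeff (2 * N - j) - (if j = N then u else 0)) /
        (((a N : ℂ) - b N * Complex.I) / 2) := by
  have hcard := Qpoly_card_roots hN hlead u
  have hdeg := Qpoly_natDegree hN hlead u
  have hk : 2 * N - j ≤ (Qpoly N a b u).natDegree := by omega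
  have hV := Polynomial.coeff_eq_esymm_roots_of_card (by rw [hcard, hdeg]) hk
  rw [hdeg] at hV
  have hjj : 2 * N - (2 * N - j) = j := by omega
  rw [hjj] at hV
  have hlc : (Qpoly N a b u).leadingCoeff = ((a N : ℂ) - b N * Complex.I) / 2 := by
    rw [Polynomial.leadingCoeff, hdeg, Qpoly_coeff_top hN]
  rw [hlc] at hV
  have hcoeff : (Qpoly N a b u).coeff (2 * N - j) =
      (Qpoly N a b 0).coeff (2 * N - j) - (if j = N then u else 0) := by
    rw [Qpoly_sub N a b u, Polynomial.coeff_sub, Polynomial.coeff_C_mul, Polynomial.coeff_X_pow]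
    have h1 : (2 * N - j = N) ↔ (j = N) := by omega
    simp [h1, mul_ite]
  rw [hcoeff] at hV
  have hsq : ((-1 : ℂ)) ^ j * (-1) ^ j = 1 := by
    rw [← pow_add, Even.neg_one_pow ⟨j, by ring⟩]
  rw [eq_div_iff hlead]
  linear_combination (-(-1 : ℂ)^j) * hV +
    (-(((a N : ℂ) - b N * Complex.I) / 2 * (Qpoly N a b u).roots.esymm j)) * hsq

-- new material
noncomputable def Epoly (N : ℕ) (a b : ℕ → ℝ) (j : ℕ) : Polynomial ℂ :=
  if j ≤ 2 * N then
    Polynomial.C ((-1) ^ j / (((a N : ℂ) - b N * Complex.I) / 2)) *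
      (Polynomial.C ((Qpoly N a b 0).coeff (2 * N - j)) - if j = N then Polynomial.X else 0)
  else 0

lemma Epoly_eval {N : ℕ} (hN : 0 < N) {a b : ℕ → ℝ}
    (hlead : ((a N : ℂ) - b N * Complex.I) / 2 ≠ 0) (j : ℕ) (u : ℂ) :
    (Qpoly N a b u).roots.esymm j = (Epoly N a b j).eval u := by
  by_cases hj : j ≤ 2 * N
  · rw [Qpoly_esymm hN hlead u hj, Epoly, if_pos hj]
    simp only [Polynomial.eval_mul, Polynomial.eval_C, Polynomial.eval_sub]
    split <;> simp <;> ring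
  · rw [Epoly, if_neg hj]
    simp only [Polynomial.eval_zero]
    exact esymm_eq_zero_of_card_lt (by rw [Qpoly_card_roots hN hlead]; omega)

lemma Epoly_natDegree (N : ℕ) (a b : ℕ → ℝ) (j : ℕ) :
    (Epoly N a b j).natDegree ≤ if j = N then 1 else 0 := by
  rw [Epoly]
  split
  · apply le_trans (Polynomial.natDegree_C_mul_le _ _)
    apply le_trans (Polynomial.natDegree_sub_le _ _)
    simp only [Polynomial.natDegree_C, max_eq_right, zero_le]
    split
    · simp [Polynomial.natDegree_X]
    · simp
  · simp

lemma multiset_exists_fn {m : ℕ} (s : Multiset ℂ) (hs : Multiset.card s = m) :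
    ∃ f : Fin m → ℂ, (Finset.univ.val.map f) = s := by
  have hl : s.toList.length = m := by rw [Multiset.length_toList, hs]
  refine ⟨fun i => s.toList.get (Fin.cast hl.symm i), ?_⟩
  rw [Fin.univ_val_map]
  rw [← List.ofFn_congr hl s.toList.get, List.ofFn_get]
  exact s.coe_toList

lemma newton_eval {m : ℕ} (f : Fin m → ℂ) (k : ℕ) (hk : 0 < k) :
    ∑ i, f i ^ k =
      (-1) ^ (k + 1) * k * (Finset.univ.val.map f).esymm k -
        ∑ a ∈ (Finset.HasAntidiagonal.antidiagonal k).filter (fun a => a.1 ∈ Set.Ioo 0 k),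
          (-1) ^ a.1 * (Finset.univ.val.map f).esymm a.1 * ∑ i, f i ^ a.2 := by
  have he : ∀ j, MvPolynomial.eval f (MvPolynomial.esymm (Fin m) ℂ j) =
      (Finset.univ.val.map f).esymm j := by
    intro j
    simp only [MvPolynomial.esymm, map_sum, map_prod, MvPolynomial.eval_X]
    rw [Finset.esymm_map_val]
  have h := congrArg (MvPolynomial.eval f)
    (MvPolynomial.psum_eq_mul_esymm_sub_sum (Fin m) ℂ k hk)
  simp only [MvPolynomial.psum, map_sub, map_mul, map_sum, map_pow, MvPolynomial.eval_X,
    map_natCast, map_neg, map_one, he] at h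
  exact h

lemma exists_powerSumPoly {N : ℕ} (hN : 0 < N) (a b : ℕ → ℝ)
    (hlead : ((a N : ℂ) - b N * Complex.I) / 2 ≠ 0) (k : ℕ) :
    ∃ P : Polynomial ℂ, P.natDegree ≤ k / N ∧
      ∀ u : ℂ, ((Qpoly N a b u).roots.map (· ^ k)).sum = P.eval u := by
  induction k using Nat.strong_induction_on with
  | _ k IH =>
  rcases Nat.eq_zero_or_pos k with rfl | hk
  · refine ⟨Polynomial.C ((2 * N : ℕ) : ℂ),
      by simp only [Polynomial.natDegree_C]; exact Nat.zero_le _, fun u => ?_⟩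
    simp only [pow_zero, Polynomial.eval_C]
    rw [Multiset.map_const', Multiset.sum_replicate, Qpoly_card_roots hN hlead u]
    simp
  · choose P hP1 hP2 using IH
    set P' : ℕ → Polynomial ℂ := fun j => if h : j < k then P j h else 0 with hP'
    refine ⟨Polynomial.C ((-1) ^ (k + 1) * (k : ℂ)) * Epoly N a b k -
        ∑ p ∈ (Finset.HasAntidiagonal.antidiagonal k).filter (fun p => p.1 ∈ Set.Ioo 0 k),
          Polynomial.C ((-1) ^ p.1 : ℂ) * (Epoly N a b p.1 * P' p.2), ?_, ?_⟩
    · apply le_trans (Polynomial.natDegree_sub_le _ _)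
      apply max_le
      · apply le_trans (Polynomial.natDegree_C_mul_le _ _)
        apply le_trans (Epoly_natDegree N a b k)
        split
        · subst ‹k = N›; rw [Nat.div_self hN]
        · exact Nat.zero_le _
      · apply Polynomial.natDegree_sum_le_of_forall_le
        intro p hp
        simp only [Finset.mem_filter, Finset.HasAntidiagonal.mem_antidiagonal, Set.mem_Ioo] at hp
        obtain ⟨hsum, hp1, hp2⟩ := hp
        apply le_trans (Polynomial.natDegree_C_mul_le _ _)
        apply le_trans (Polynomial.natDegree_mul_le)
        have h2 : p.2 < k := by omega
        have hdeg2 : (P' p.2).natDegree ≤ p.2 / N := by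
          rw [hP']; simp only [h2, dif_pos]; exact hP1 p.2 h2
        apply le_trans (add_le_add (Epoly_natDegree N a b p.1) hdeg2)
        by_cases hpN : p.1 = N
        · rw [if_pos hpN]
          have hp2' : p.2 = k - N := by omega
          rw [hp2']
          have h := Nat.add_div_right (k - N) hN
          have hkN : k - N + N = k := by omega
          rw [hkN] at h
          omega
        · rw [if_neg hpN]
          simp only [zero_add]
          exact Nat.div_le_div_right (by omega)
    · intro u
      obtain ⟨f, hf⟩ := multiset_exists_fn (Qpoly N a b u).roots (Qpoly_card_roots hN hlead u)
      have hsum : ∀ j : ℕ, ((Qpoly N a b u).roots.map (· ^ j)).sum = ∑ i, f i ^ j := by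
        intro j
        rw [← hf, Multiset.map_map]
        rfl
      have hnewton := newton_eval f k hk
      rw [hf] at hnewton
      rw [hsum k, hnewton]
      simp only [Polynomial.eval_sub, Polynomial.eval_mul, Polynomial.eval_C,
        Polynomial.eval_finset_sum]
      rw [Epoly_eval hN hlead k u]
      congr 1
      apply Finset.sum_congr rfl
      intro p hp
      simp only [Finset.mem_filter, Finset.HasAntidiagonal.mem_antidiagonal, Set.mem_Ioo] at hp
      obtain ⟨hsum', hp1, hp2⟩ := hp
      have h2 : p.2 < k := by omega
      rw [Epoly_eval hN hlead p.1 u]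
      rw [← hsum p.2]
      rw [hP']
      simp only [h2, dif_pos]
      rw [hP2 p.2 h2 u]
      ring



lemma exp_I_inj {s r : ℝ} (hs : s ∈ Set.Ico 0 (2 * π)) (hr : r ∈ Set.Ico 0 (2 * π))
    (h : Complex.exp (s * Complex.I) = Complex.exp (r * Complex.I)) : s = r := by
  rw [Complex.exp_eq_exp_iff_exists_int] at h
  obtain ⟨n, hn⟩ := h
  have hI : (Complex.I : ℂ) ≠ 0 := Complex.I_ne_zero
  have h2 : (s : ℂ) = r + n * (2 * π) := by
    have := hn
    rw [show (n : ℂ) * (2 * ↑π * Complex.I) = ((n : ℂ) * (2 * ↑π)) * Complex.I by ring] at this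
    have h3 : ((s : ℂ) - (r + n * (2 * π))) * Complex.I = 0 := by
      rw [sub_mul, add_mul, this]; ring
    rcases mul_eq_zero.mp h3 with h4 | h4
    · exact sub_eq_zero.mp h4
    · exact absurd h4 hI
  have h5 : s = r + n * (2 * π) := by exact_mod_cast h2
  have hpi : 0 < π := Real.pi_pos
  have hn0 : n = 0 := by
    rcases lt_trichotomy n 0 with hlt | heq | hgt
    · have : (n : ℝ) ≤ -1 := by exact_mod_cast Int.le_sub_one_of_lt hlt
      nlinarith [hs.1, hs.2, hr.1, hr.2]
    · exact heq
    · have : (1 : ℝ) ≤ n := by exact_mod_cast hgt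
      nlinarith [hs.1, hs.2, hr.1, hr.2]
  rw [hn0] at h5
  simpa using h5

end SymmAux

/-- Symmetrization: the sum of a trigonometric polynomial over the `2N` branch
preimages is an algebraic polynomial of degree at most `n/N` of `U(t)`. -/
theorem symmetrization_on_Tset
    (E : Set ℝ) (N : ℕ) (U : ℝ → ℝ) (B : Fin (2 * N) → Set ℝ)
    (hE : IsTSetWithBranches E N U B)
    (n : ℕ) (V : ℝ → ℝ) (hV : IsTrigPolyDegLE V n) :
    ∃ S : Polynomial ℝ, (S.natDegree : ℝ) ≤ (n : ℝ) / (N : ℝ) ∧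
      ∀ t ∈ E, U t ∈ Set.Ioo (-1 : ℝ) 1 →
        ∀ ts : Fin (2 * N) → ℝ, (∀ h, ts h ∈ B h ∧ U (ts h) = U t) →
          ∑ h, V (ts h) = S.eval (U t) := by
  obtain ⟨hN, ⟨a, b, hab, hU⟩, hEeq, hBicc, hdisj, hEunion, hmono, himg⟩ := hE
  obtain ⟨va, vb, hVeq⟩ := hV
  have hlead : ((a N : ℂ) - b N * Complex.I) / 2 ≠ 0 := by
    intro hc
    have h2 : (a N : ℂ) - b N * Complex.I = 0 := by
      field_simp at hc; simpa using hc
    have hre : a N = 0 := by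
      have := congrArg Complex.re h2; simpa using this
    have him : b N = 0 := by
      have := congrArg Complex.im h2; simpa using this
    rcases hab with h | h <;> [exact h hre; exact h him]
  choose P hPdeg hPeval using exists_powerSumPoly hN a b hlead
  set G : Polynomial ℂ := Polynomial.C (((2 * N : ℕ) : ℂ) * (va 0 : ℂ)) +
      ∑ k ∈ Finset.Icc 1 n, Polynomial.C ((va k : ℂ) - vb k * Complex.I) * P k with hG
  set S : Polynomial ℝ := ∑ j ∈ Finset.range (G.natDegree + 1),
      Polynomial.C ((G.coeff j).re) * Polynomial.X ^ j with hSdef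
  have hGdeg : G.natDegree ≤ n / N := by
    apply le_trans (Polynomial.natDegree_add_le _ _)
    apply max_le
    · rw [Polynomial.natDegree_C]; exact Nat.zero_le _
    · apply Polynomial.natDegree_sum_le_of_forall_le
      intro k hk
      apply le_trans (Polynomial.natDegree_C_mul_le _ _)
      exact le_trans (hPdeg k) (Nat.div_le_div_right (Finset.mem_Icc.mp hk).2)
  refine ⟨S, ?_, ?_⟩
  · have hSG : S.natDegree ≤ G.natDegree := by
      apply Polynomial.natDegree_sum_le_of_forall_le
      intro j hj
      apply le_trans (Polynomial.natDegree_C_mul_le _ _)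
      rw [Polynomial.natDegree_X_pow]
      exact Nat.lt_succ_iff.mp (Finset.mem_range.mp hj)
    calc (S.natDegree : ℝ) ≤ ((n / N : ℕ) : ℝ) := by exact_mod_cast le_trans hSG hGdeg
      _ ≤ (n : ℝ) / (N : ℝ) := Nat.cast_div_le
  · intro t ht hUt ts hts
    set u : ℝ := U t with hu
    set z : Fin (2 * N) → ℂ := fun h => Complex.exp (ts h * Complex.I) with hz
    have hBsubE : ∀ h, B h ⊆ E := fun h => by rw [hEunion]; exact Set.subset_iUnion B h
    have htsE : ∀ h, ts h ∈ E := fun h => hBsubE h (hts h).1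
    have htsIco : ∀ h, ts h ∈ Set.Ico 0 (2 * π) := by
      intro h
      have := htsE h
      rw [hEeq] at this
      exact this.1
    have hint : ∀ h, ts h ∈ interior (B h) := by
      intro h
      obtain ⟨x, y, hxy, hBh⟩ := hBicc h
      obtain ⟨hmem, hUts⟩ := hts h
      rw [hBh] at hmem
      rw [hBh, interior_Icc]
      have himgh := himg h
      rw [hBh] at himgh
      have hxm : x ∈ Set.Icc x y := Set.left_mem_Icc.mpr hxy.le
      have hym : y ∈ Set.Icc x y := Set.right_mem_Icc.mpr hxy.le
      obtain ⟨w1, hw1, hw1v⟩ : ∃ w ∈ Set.Icc x y, U w = -1 := by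
        have hm1 : (-1 : ℝ) ∈ U '' Set.Icc x y := by
          rw [himgh]; constructor <;> norm_num
        obtain ⟨w, hw, hwv⟩ := hm1; exact ⟨w, hw, hwv⟩
      obtain ⟨w2, hw2, hw2v⟩ : ∃ w ∈ Set.Icc x y, U w = 1 := by
        have hm1 : (1 : ℝ) ∈ U '' Set.Icc x y := by
          rw [himgh]; constructor <;> norm_num
        obtain ⟨w, hw, hwv⟩ := hm1; exact ⟨w, hw, hwv⟩
      have hxne : ts h ≠ x ∧ ts h ≠ y := by
        rcases hmono h with hm | hm
        · rw [hBh] at hm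
          have hUxle : U x ≤ -1 := by
            rcases eq_or_lt_of_le hw1.1 with heq | hlt
            · rw [heq, hw1v]
            · exact le_of_lt (hw1v ▸ hm hxm hw1 hlt)
          have hUyge : 1 ≤ U y := by
            rcases eq_or_lt_of_le hw2.2 with heq | hlt
            · rw [← heq, hw2v]
            · exact le_of_lt (hw2v ▸ hm hw2 hym hlt)
          constructor <;> intro heq <;> rw [heq] at hUts <;>
            rw [← hUts] at hUt <;> obtain ⟨h1, h2⟩ := hUt <;> linarith
        · rw [hBh] at hm
          have hUxge : 1 ≤ U x := by
            rcases eq_or_lt_of_le hw2.1 with heq | hlt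
            · rw [heq, hw2v]
            · exact le_of_lt (hw2v ▸ hm hxm hw2 hlt)
          have hUyle : U y ≤ -1 := by
            rcases eq_or_lt_of_le hw1.2 with heq | hlt
            · rw [← heq, hw1v]
            · exact le_of_lt (hw1v ▸ hm hw1 hym hlt)
          constructor <;> intro heq <;> rw [heq] at hUts <;>
            rw [← hUts] at hUt <;> obtain ⟨h1, h2⟩ := hUt <;> linarith
      exact ⟨lt_of_le_of_ne hmem.1 (Ne.symm hxne.1), lt_of_le_of_ne hmem.2 hxne.2⟩
    have htsne : ∀ h h', h ≠ h' → ts h ≠ ts h' := by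
      intro h h' hne heq
      have hmem : ts h ∈ interior (B h) ∩ interior (B h') := ⟨hint h, heq ▸ hint h'⟩
      rw [hdisj h h' hne] at hmem
      exact hmem
    have hzinj : ∀ h h', z h = z h' → h = h' := by
      intro h h' hzz
      by_contra hne
      exact htsne h h' hne (exp_I_inj (htsIco h) (htsIco h') hzz)
    have hroot : ∀ h, (Qpoly N a b (u : ℂ)).IsRoot (z h) := by
      intro h
      have heval := Qpoly_eval N a b (u : ℂ) (ts h)
      rw [Polynomial.IsRoot, hz]
      simp only []
      rw [heval]
      have hUtsh : a 0 + ∑ k ∈ Finset.Icc 1 N,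
          (a k * Real.cos (k * ts h) + b k * Real.sin (k * ts h)) = u := by
        rw [← hU (ts h)]; exact (hts h).2
      rw [hUtsh]
      simp
    have hQne := Qpoly_ne_zero hN hlead (u : ℂ)
    have hcard := Qpoly_card_roots hN hlead (u : ℂ)
    have hnodup : (Finset.univ.val.map z).Nodup :=
      Multiset.Nodup.map_on (fun x _ y _ hxy => hzinj x y hxy) Finset.univ.nodup
    have hle : Finset.univ.val.map z ≤ (Qpoly N a b (u : ℂ)).roots := by
      rw [Multiset.le_iff_count]
      intro c
      by_cases hc : c ∈ Finset.univ.val.map z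
      · have h1 := Multiset.nodup_iff_count_le_one.mp hnodup c
        obtain ⟨h0, _, rfl⟩ := Multiset.mem_map.mp hc
        have h2 : z h0 ∈ (Qpoly N a b (u : ℂ)).roots := by
          rw [Polynomial.mem_roots hQne]; exact hroot h0
        have h3 := Multiset.one_le_count_iff_mem.mpr h2
        omega
      · rw [Multiset.count_eq_zero_of_notMem hc]; exact Nat.zero_le _
    have hrooteq : (Qpoly N a b (u : ℂ)).roots = Finset.univ.val.map z := by
      refine (Multiset.eq_of_le_of_card_le hle ?_).symm
      rw [hcard, Multiset.card_map]
      simp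
    have hpowsum : ∀ k : ℕ, ((Qpoly N a b (u : ℂ)).roots.map (· ^ k)).sum = ∑ h, z h ^ k := by
      intro k; rw [hrooteq, Multiset.map_map]; rfl
    have hterm : ∀ (k : ℕ) (h : Fin (2 * N)),
        va k * Real.cos (k * ts h) + vb k * Real.sin (k * ts h) =
        (((va k : ℂ) - vb k * Complex.I) * z h ^ k).re := by
      intro k h
      have hzk : z h ^ k = Complex.exp ((k * ts h : ℝ) * Complex.I) := by
        rw [hz]
        simp only []
        rw [← Complex.exp_nat_mul]
        push_cast
        ring_nf
      rw [hzk, Complex.exp_mul_I, ← Complex.ofReal_cos, ← Complex.ofReal_sin]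
      simp only [Complex.mul_re, Complex.sub_re, Complex.sub_im, Complex.ofReal_re,
        Complex.ofReal_im, Complex.add_re, Complex.add_im, Complex.mul_im, Complex.I_re,
        Complex.I_im]
      push_cast
      ring
    have hsplit : ∑ h, V (ts h) = (2 * N : ℕ) * va 0 +
        ∑ k ∈ Finset.Icc 1 n, ∑ h, (va k * Real.cos (k * ts h) + vb k * Real.sin (k * ts h)) := by
      simp_rw [hVeq]
      rw [Finset.sum_add_distrib, Finset.sum_const, Finset.card_univ, Fintype.card_fin,
        Finset.sum_comm]
      push_cast
      ring
    have hstep2 : ∀ k ∈ Finset.Icc 1 n,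
        ∑ h, (va k * Real.cos (k * ts h) + vb k * Real.sin (k * ts h)) =
        (((va k : ℂ) - vb k * Complex.I) * (P k).eval (u : ℂ)).re := by
      intro k _
      have hPk : (P k).eval (u : ℂ) = ∑ h, z h ^ k := by
        rw [← hPeval k (u : ℂ), hpowsum k]
      rw [hPk, Finset.mul_sum, Complex.re_sum]
      exact Finset.sum_congr rfl fun h _ => hterm k h
    have htot : ∑ h, V (ts h) = (G.eval (u : ℂ)).re := by
      rw [hsplit]
      have hGe : G.eval (u : ℂ) = ((2 * N : ℕ) : ℂ) * (va 0 : ℂ) +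
          ∑ k ∈ Finset.Icc 1 n, ((va k : ℂ) - vb k * Complex.I) * (P k).eval (u : ℂ) := by
        rw [hG]
        simp [Polynomial.eval_finset_sum]
      rw [hGe, Complex.add_re, Complex.re_sum]
      congr 1
      · have : (((2 * N : ℕ) : ℂ) * (va 0 : ℂ)) = (((2 * N : ℕ) * va 0 : ℝ) : ℂ) := by push_cast; ring
        rw [this, Complex.ofReal_re]
      · exact (Finset.sum_congr rfl hstep2)
    have hSG : S.eval u = (G.eval (u : ℂ)).re := by
      conv_rhs => rw [Polynomial.eval_eq_sum_range]
      rw [Complex.re_sum]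
      rw [hSdef]
      rw [Polynomial.eval_finset_sum]
      apply Finset.sum_congr rfl
      intro j _
      rw [Polynomial.eval_mul, Polynomial.eval_C, Polynomial.eval_pow, Polynomial.eval_X]
      have h1 : ((u : ℂ) ^ j).re = u ^ j := by rw [← Complex.ofReal_pow, Complex.ofReal_re]
      have h2 : ((u : ℂ) ^ j).im = 0 := by rw [← Complex.ofReal_pow, Complex.ofReal_im]
      rw [Complex.mul_re, h1, h2]
      ring
    rw [htot]
    exact hSG.symm
end
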